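/- Let r ≥ 1, u ∈ ℤ and k₁, …, k_r ≥ 1, and let α = δᵘ·a₁^{k₁}·a₂^{k₂}·⋯·a_r^{k_r} (indices mod 3; the corresponding letter list is a nondecreasing word with syllable number r, so this is the Garside normal form of α). Suppose π(α) is a 3-cycle, α is a summit element with summit exponent u, and every conjugate β of α that is a summit element has normal form β = δᵘ·∏w′ with the nondecreasing word w′ of syllable number ≥ r. Then (i) u + r ≡ 0 (mod 3), and (ii) k_i is even for some 1 ≤ i ≤ r. -/

import Mathlib

namespace Braid

/-- Relations of the dual (band-generator) presentation of the 3-braid group: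
`a (i+1) * a i = a (i+2) * a (i+1)` for all `i : ZMod 3`. -/
def braidRels : Set (FreeGroup (ZMod 3)) :=
  { r | ∃ i : ZMod 3,
      r = FreeGroup.of (i + 1) * FreeGroup.of i *
          (FreeGroup.of (i + 2) * FreeGroup.of (i + 1))⁻¹ }

/-- The 3-braid group with the band-generator presentation. -/
abbrev B3 := PresentedGroup braidRels

/-- The band generators `a i`, `i : ZMod 3`. -/
def a (i : ZMod 3) : B3 := PresentedGroup.of i

/-- The fundamental element `δ = a₂ * a₁`. -/
def δ : B3 := a 2 * a 1

/-- The submonoid of positive braids. -/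
def Pos : Submonoid B3 := Submonoid.closure (Set.range a)

/-- The exponent-sum homomorphism, sending each generator to `1 : ℤ`. -/
def eHom : B3 →* Multiplicative ℤ :=
  PresentedGroup.toGroup (f := fun _ => Multiplicative.ofAdd (1 : ℤ)) (by
    rintro r ⟨i, rfl⟩
    simp only [map_mul, map_inv, FreeGroup.lift_apply_of]
    group)

/-- The exponent sum (letter length on positive braids) as an integer. -/
def elen (x : B3) : ℤ := Multiplicative.toAdd (eHom x)

/-- The right complement `X* = X⁻¹ * δ^{e(X)}`. -/
def rc (X : B3) : B3 := X⁻¹ * δ ^ elen X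

/-- The `n`-th power of the rotation automorphism `τ`: `τ^n (x) = δ^{-n} * x * δ^n`. -/
def tauPow (n : ℤ) (x : B3) : B3 := δ ^ (-n) * x * δ ^ n

/-- The positive braid represented by a list of generator indices. -/
def wordProd (l : List (ZMod 3)) : B3 := (l.map a).prod

/-- A word is nondecreasing if each letter index is the previous one or the previous one
plus `1` (mod 3). -/
def NDWord (l : List (ZMod 3)) : Prop :=
  l.Chain' (fun x y => y = x ∨ y = x + 1)

/-- The syllable number of a word: the number of maximal constant blocks. -/
def syl : List (ZMod 3) → ℕ
  | [] => 0
  | [_] => 1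
  | x :: y :: t => (if x = y then 0 else 1) + syl (y :: t)

/-- The permutations underlying the band generators. -/
def perm3 (i : ZMod 3) : Equiv.Perm (Fin 3) :=
  if i = 0 then Equiv.swap 0 2 else if i = 1 then Equiv.swap 0 1 else Equiv.swap 1 2

lemma perm3_rel : ∀ i : ZMod 3,
    perm3 (i + 1) * perm3 i * (perm3 (i + 2) * perm3 (i + 1))⁻¹ = 1 := by decide

/-- The homomorphism to the symmetric group on 3 letters (underlying permutation). -/
def permOf : B3 →* Equiv.Perm (Fin 3) :=
  PresentedGroup.toGroup (f := perm3) (by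
    rintro r ⟨i, rfl⟩
    simp only [map_mul, map_inv, FreeGroup.lift_apply_of]
    exact perm3_rel i)

/-- The set of band generators and their inverses. -/
def genSet : Set B3 := Set.range a ∪ Set.range (fun i => (a i)⁻¹)

/-- The band-generator word length of a 3-braid. -/
noncomputable def wordLen (x : B3) : ℕ :=
  sInf { n | ∃ s : List B3, s.length = n ∧ (∀ g ∈ s, g ∈ genSet) ∧ s.prod = x }

/-- The minimal band-generator word length in the conjugacy class. -/
noncomputable def minConjLen (x : B3) : ℕ :=
  sInf { n | ∃ y, IsConj x y ∧ wordLen y = n }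

/-- `α` is a summit element with summit exponent `u` if `δ^{-u} * α` is positive and `u` is
the maximal such exponent over the conjugacy class. -/
def IsSummit (α : B3) (u : ℤ) : Prop :=
  δ ^ (-u) * α ∈ Pos ∧ ∀ β : B3, IsConj α β → ∀ v : ℤ, δ ^ (-v) * β ∈ Pos → v ≤ u

-- chunk 1: basic relations
lemma rel3 (i : ZMod 3) : a (i + 1) * a i = a (i + 2) * a (i + 1) := by
  have h : (PresentedGroup.mk braidRels)
      (FreeGroup.of (i + 1) * FreeGroup.of i *
        (FreeGroup.of (i + 2) * FreeGroup.of (i + 1))⁻¹) = 1 :=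
    (QuotientGroup.eq_one_iff _).mpr (Subgroup.subset_normalClosure ⟨i, rfl⟩)
  simp only [map_mul, map_inv] at h
  have := mul_eq_one_iff_eq_inv.mp h
  rw [inv_inv] at this
  exact this

lemma delta_eq (i : ZMod 3) : δ = a (i + 1) * a i := by
  have r1 : a 2 * a 1 = a 0 * a 2 := by
    have := rel3 1
    rwa [show (1:ZMod 3)+1 = 2 by decide, show (1:ZMod 3)+2 = 0 by decide] at this
  have r2 : a 0 * a 2 = a 1 * a 0 := by
    have := rel3 2
    rwa [show (2:ZMod 3)+1 = 0 by decide, show (2:ZMod 3)+2 = 1 by decide] at this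
  have tri : ∀ j : ZMod 3, j = 0 ∨ j = 1 ∨ j = 2 := by decide
  rcases tri i with h | h | h <;> subst h
  · rw [show (0:ZMod 3)+1 = 1 by decide]
    show δ = a 1 * a 0
    rw [δ, r1, r2]
  · rw [show (1:ZMod 3)+1 = 2 by decide]; rfl
  · rw [show (2:ZMod 3)+1 = 0 by decide]
    show δ = a 0 * a 2
    rw [δ, r1]

lemma a_mul_delta (i : ZMod 3) : a i * δ = δ * a (i + 1) := by
  have h := rel3 (i + 2)
  have e1 : i + 2 + 1 = i := by
    have : (3 : ZMod 3) = 0 := by decide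
    linear_combination this
  have e2 : i + 2 + 2 = i + 1 := by
    have : (3 : ZMod 3) = 0 := by decide
    linear_combination this
  rw [e1, e2] at h
  calc a i * δ = a i * (a (i+2) * a (i+1)) := by
        rw [delta_eq (i+1), show i+1+1 = i+2 by ring]
    _ = (a i * a (i+2)) * a (i+1) := by rw [mul_assoc]
    _ = (a (i+1) * a i) * a (i+1) := by rw [h]
    _ = δ * a (i+1) := by rw [← delta_eq i]
-- chunk 2
lemma delta_mul_a (j : ZMod 3) : δ * a j = a (j - 1) * δ := by
  have h := a_mul_delta (j - 1)
  rw [sub_add_cancel] at h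
  exact h.symm

lemma a_mul_delta_zpow (v : ℤ) (i : ZMod 3) :
    a i * δ ^ v = δ ^ v * a (i + (v : ZMod 3)) := by
  induction v using Int.induction_on with
  | zero => simp
  | succ n ih =>
    have e : ((n : ℤ) + 1 : ℤ) = (n + 1 : ℤ) := rfl
    rw [zpow_add_one, ← mul_assoc, ih, mul_assoc, a_mul_delta, ← mul_assoc,
      ← zpow_add_one]
    congr 2
    push_cast
    ring
  | pred n ih =>
    have h : ∀ X : ZMod 3, a X * δ⁻¹ = δ⁻¹ * a (X - 1) := by
      intro X
      have hX := a_mul_delta (X - 1)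
      rw [sub_add_cancel] at hX
      rw [mul_inv_eq_iff_eq_mul, mul_assoc, hX, inv_mul_cancel_left]
    calc a i * δ ^ (-(n:ℤ) - 1) = a i * δ ^ (-(n:ℤ)) * δ⁻¹ := by
          rw [mul_assoc, ← zpow_sub_one]
      _ = δ ^ (-(n:ℤ)) * a (i + ((-(n:ℤ) : ℤ) : ZMod 3)) * δ⁻¹ := by rw [ih]
      _ = δ ^ (-(n:ℤ)) * δ⁻¹ * a (i + ((-(n:ℤ) : ℤ) : ZMod 3) - 1) := by
          rw [mul_assoc, h, ← mul_assoc]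
      _ = δ ^ (-(n:ℤ) - 1) * a (i + ((-(n:ℤ) - 1 : ℤ) : ZMod 3)) := by
          rw [← zpow_sub_one]
          congr 1
          push_cast
          ring

lemma a_pow_mul_delta_zpow (v : ℤ) (i : ZMod 3) (m : ℕ) :
    a i ^ m * δ ^ v = δ ^ v * a (i + (v : ZMod 3)) ^ m := by
  induction m with
  | zero => simp
  | succ m ih =>
    rw [pow_succ, mul_assoc, a_mul_delta_zpow, ← mul_assoc, ih, mul_assoc, ← pow_succ]

lemma a_mem_Pos (i : ZMod 3) : a i ∈ Pos := Submonoid.subset_closure ⟨i, rfl⟩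

lemma wordProd_mem_Pos (l : List (ZMod 3)) : wordProd l ∈ Pos := by
  apply Submonoid.list_prod_mem
  intro x hx
  rcases List.mem_map.mp hx with ⟨i, _, rfl⟩
  exact a_mem_Pos i

lemma permOf_a (i : ZMod 3) : permOf (a i) = perm3 i := by
  simp [permOf, a, PresentedGroup.toGroup.of]

lemma permOf_delta : permOf δ = perm3 2 * perm3 1 := by
  rw [δ, map_mul, permOf_a, permOf_a]

lemma IsSummit.conj {α β : B3} {u : ℤ} (hs : IsSummit α u) (h : IsConj α β)
    (hpos : δ ^ (-u) * β ∈ Pos) : IsSummit β u :=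
  ⟨hpos, fun γ hγ v hv => hs.2 γ (h.trans hγ) v hv⟩
-- chunk 3 : block words
def awF (c : ZMod 3) : (q : ℕ) → (Fin q → ℕ) → List (ZMod 3)
  | 0, _ => []
  | q + 1, m => List.replicate (m 0) c ++ awF (c + 1) q (fun j => m j.succ)

lemma wordProd_append (l₁ l₂ : List (ZMod 3)) :
    wordProd (l₁ ++ l₂) = wordProd l₁ * wordProd l₂ := by
  simp [wordProd]

lemma wordProd_replicate (m : ℕ) (x : ZMod 3) :
    wordProd (List.replicate m x) = a x ^ m := by
  simp [wordProd, List.map_replicate, List.prod_replicate]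

lemma wordProd_awF : ∀ (q : ℕ) (c : ZMod 3) (m : Fin q → ℕ),
    wordProd (awF c q m) =
      (List.ofFn (fun j : Fin q => a (c + ((j : ℕ) : ZMod 3)) ^ m j)).prod := by
  intro q
  induction q with
  | zero => intro c m; simp [awF, wordProd]
  | succ q ih =>
    intro c m
    rw [show awF c (q+1) m = List.replicate (m 0) c ++ awF (c + 1) q (fun j => m j.succ) from rfl,
      wordProd_append, wordProd_replicate, ih, List.ofFn_succ, List.prod_cons]
    congr 2
    · norm_num
    · congr 1
      funext j
      congr 2
      have : ((j.succ : ℕ) : ZMod 3) = ((j : ℕ) : ZMod 3) + 1 := by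
        rw [Fin.val_succ]; push_cast; ring
      rw [this]; ring

lemma awF_exists_cons (q : ℕ) (c : ZMod 3) (m : Fin (q+1) → ℕ) (h : 1 ≤ m 0) :
    ∃ t, awF c (q+1) m = c :: t := by
  obtain ⟨n, hn⟩ : ∃ n, m 0 = n + 1 := ⟨m 0 - 1, by omega⟩
  refine ⟨List.replicate n c ++ awF (c+1) q (fun j => m j.succ), ?_⟩
  show List.replicate (m 0) c ++ _ = _
  rw [hn]
  rfl

lemma chain'_rep' {R : ZMod 3 → ZMod 3 → Prop} {l : List (ZMod 3)} {x : ZMod 3}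
    (hl : l.Chain' R) (hh : ∀ y ∈ l.head?, R x y) (hx : R x x) :
    ∀ n, (List.replicate n x ++ l).Chain' R := by
  intro n
  induction n with
  | zero => exact hl
  | succ n ih =>
    rw [List.replicate_succ, List.cons_append, List.Chain', List.isChain_cons]
    refine ⟨?_, ih⟩
    intro y hy
    cases n with
    | zero => exact hh y hy
    | succ n =>
      rw [List.replicate_succ, List.cons_append, List.head?_cons] at hy
      cases hy
      exact hx

lemma ndword_awF : ∀ (q : ℕ) (c : ZMod 3) (m : Fin q → ℕ), (∀ j, 1 ≤ m j) →
    NDWord (awF c q m) := by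
  intro q
  induction q with
  | zero => intro c m _; exact List.isChain_nil
  | succ q ih =>
    intro c m hm
    show (List.replicate (m 0) c ++ awF (c + 1) q (fun j => m j.succ)).Chain' _
    apply chain'_rep'
    · exact ih (c+1) _ (fun j => hm j.succ)
    · intro y hy
      cases q with
      | zero => simp [awF] at hy
      | succ q =>
        obtain ⟨t, ht⟩ := awF_exists_cons q (c+1) (fun j => m j.succ) (hm (Fin.succ 0))
        rw [ht, List.head?_cons] at hy
        cases hy
        right
        rfl
    · left; rfl

lemma syl_rep_cons (x : ZMod 3) (t : List (ZMod 3)) :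
    ∀ n, syl (List.replicate n x ++ (x :: t)) = syl (x :: t) := by
  intro n
  induction n with
  | zero => rfl
  | succ n ih =>
    rw [List.replicate_succ, List.cons_append]
    cases n with
    | zero => simp [syl]
    | succ n =>
      rw [List.replicate_succ, List.cons_append]
      rw [show syl (x :: x :: (List.replicate n x ++ x :: t))
            = (if x = x then 0 else 1) + syl (x :: (List.replicate n x ++ x :: t)) from rfl]
      rw [if_pos rfl, ← List.cons_append, ← List.replicate_succ, ih]
      omega

lemma syl_awF : ∀ (q : ℕ) (c : ZMod 3) (m : Fin q → ℕ), (∀ j, 1 ≤ m j) →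
    syl (awF c q m) = q := by
  intro q
  induction q with
  | zero => intro c m _; rfl
  | succ q ih =>
    intro c m hm
    obtain ⟨n, hn⟩ : ∃ n, m 0 = n + 1 := ⟨m 0 - 1, by have := hm 0; omega⟩
    have h1 : awF c (q+1) m = List.replicate n c ++ (c :: awF (c+1) q (fun j => m j.succ)) := by
      show List.replicate (m 0) c ++ _ = _
      rw [hn, List.replicate_succ']
      simp
    rw [h1, syl_rep_cons]
    cases q with
    | zero => rfl
    | succ q =>
      obtain ⟨t, ht⟩ := awF_exists_cons q (c+1) (fun j => m j.succ) (hm (Fin.succ 0))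
      rw [ht]
      rw [show syl (c :: (c+1) :: t) = (if c = (c+1) then 0 else 1) + syl ((c+1) :: t) from rfl]
      have hne : ∀ x : ZMod 3, ¬ x = x + 1 := by decide
      rw [if_neg (hne c), ← ht, ih (c+1) _ (fun j => hm j.succ)]
      omega
-- chunk 4 : permutation computations
lemma pair' : ∀ i : ZMod 3, perm3 (i+1) * perm3 (i+1+1) = (perm3 2 * perm3 1)⁻¹ := by decide

def QP : ℕ → ZMod 3 → Equiv.Perm (Fin 3)
  | 0, _ => 1
  | n+1, i => perm3 (i+1) * QP n (i+1)

lemma QP_eq : ∀ (n : ℕ) (i : ZMod 3),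
    (List.ofFn fun j : Fin n => perm3 (i + ((j:ℕ):ZMod 3) + 1)).prod = QP n i := by
  intro n
  induction n with
  | zero => intro i; rfl
  | succ n ih =>
    intro i
    rw [List.ofFn_succ, List.prod_cons]
    have hf : (fun j : Fin n => perm3 (i + ((j.succ : ℕ) : ZMod 3) + 1))
        = fun j : Fin n => perm3 ((i+1) + ((j : ℕ) : ZMod 3) + 1) := by
      funext j
      congr 1
      rw [Fin.val_succ]
      push_cast
      ring
    show perm3 (i + ((0:ℕ):ZMod 3) + 1) * (List.ofFn fun j : Fin n =>
      perm3 (i + ((j.succ : ℕ) : ZMod 3) + 1)).prod = QP (n+1) i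
    rw [hf, ih (i+1)]
    show _ = perm3 (i+1) * QP n (i+1)
    norm_num

lemma QP_even : ∀ (t : ℕ) (i : ZMod 3), QP (2*t) i = ((perm3 2 * perm3 1)⁻¹) ^ t := by
  intro t
  induction t with
  | zero => intro i; rfl
  | succ t ih =>
    intro i
    rw [show 2*(t+1) = 2*t+1+1 by ring]
    show perm3 (i+1) * (perm3 (i+1+1) * QP (2*t) (i+1+1)) = _
    rw [← mul_assoc, pair', ih, pow_succ']

lemma perm3_sq : ∀ i : ZMod 3, perm3 i ^ 2 = 1 := by decide

lemma perm3_pow_odd (i : ZMod 3) {m : ℕ} (h : Odd m) : perm3 i ^ m = perm3 i := by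
  obtain ⟨t, rfl⟩ := h
  rw [pow_add, pow_mul, perm3_sq, one_pow, one_mul, pow_one]

lemma c_cube : (perm3 2 * perm3 1) ^ 3 = 1 := by decide

lemma sign_perm3 : ∀ i : ZMod 3, Equiv.Perm.sign (perm3 i) = -1 := by decide

lemma sign_delta : Equiv.Perm.sign (permOf δ) = 1 := by rw [permOf_delta]; decide
-- chunk 5 : main theorem
lemma ofFn_pow_mem_Pos {q : ℕ} (f : Fin q → ZMod 3) (g : Fin q → ℕ) :
    (List.ofFn fun j => a (f j) ^ g j).prod ∈ Pos := by
  apply Submonoid.list_prod_mem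
  intro x hx
  rcases List.mem_ofFn.mp hx with ⟨i, rfl⟩
  exact pow_mem (a_mem_Pos _) _

lemma zpow_delta_cancel (u : ℤ) (x : B3) : δ ^ (-u) * (δ ^ u * x) = x := by
  rw [← mul_assoc, ← zpow_add]
  norm_num

lemma permOf_delta_zpow_three_mul (s : ℤ) : permOf δ ^ (3 * s) = 1 := by
  rw [zpow_mul]
  norm_num [show (permOf δ)^(3:ℤ) = 1 by rw [show (3:ℤ) = ((3:ℕ):ℤ) by norm_num, zpow_natCast, permOf_delta, c_cube]]

/-- Lemma 3.2: if `α = δ^u a₁^{k₁} ⋯ a_r^{k_r}` (normal form) closes to a knot, is a summit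
element, and has minimal syllable number among its summit conjugates, then `u + r ≡ 0 (mod 3)`
and some `k_i` is even. -/
theorem summit_knot_syllables (r : ℕ) (hr : 1 ≤ r) (u : ℤ) (k : Fin r → ℕ)
    (hk : ∀ j, 1 ≤ k j) (α : B3)
    (hα : α = δ ^ u *
      (List.ofFn (fun j : Fin r => (a (((j : ℕ) : ZMod 3) + 1)) ^ (k j))).prod)
    (h3 : (permOf α).IsThreeCycle)
    (hs : IsSummit α u)
    (hmin : ∀ (β : B3) (w' : List (ZMod 3)), IsConj α β → IsSummit β u → NDWord w' →
        β = δ ^ u * wordProd w' → r ≤ syl w') :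
    (u + (r : ℤ)) % 3 = 0 ∧ ∃ j : Fin r, Even (k j) := by
  obtain ⟨n, rfl⟩ : ∃ n, r = n + 1 := ⟨r - 1, by omega⟩
  -- the underlying permutation
  have hperm : permOf α = permOf δ ^ u *
      (List.ofFn fun j : Fin (n+1) => perm3 (((j:ℕ):ZMod 3) + 1) ^ k j).prod := by
    rw [hα, map_mul, map_zpow, map_list_prod, List.map_ofFn]
    have he : (⇑permOf ∘ fun j : Fin (n+1) => a (((j:ℕ):ZMod 3) + 1) ^ k j)
        = fun j : Fin (n+1) => perm3 (((j:ℕ):ZMod 3) + 1) ^ k j := by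
      funext j
      simp [Function.comp, map_pow, permOf_a]
    rw [he]
  -- signs: the total letter number is even
  have hsum : Even (∑ j, k j) := by
    have h1 := h3.sign
    rw [hperm, map_mul, map_zpow, sign_delta, one_zpow, one_mul, map_list_prod,
      List.map_ofFn, List.prod_ofFn] at h1
    simp only [Function.comp_apply, map_pow, sign_perm3] at h1
    rw [Finset.prod_pow_eq_pow_sum] at h1
    exact (neg_one_pow_eq_one_iff_even (by decide)).mp h1
  -- normal form decomposition
  have hα2 : α = δ ^ u *
      ((List.ofFn fun i : Fin n => a (((i:ℕ):ZMod 3) + 1) ^ k i.castSucc).prod *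
        a (((n:ℕ):ZMod 3) + 1) ^ k (Fin.last n)) := by
    rw [hα, List.ofFn_succ', List.prod_concat, Fin.val_last]
    have he : (fun i : Fin n => a (((i.castSucc:ℕ):ZMod 3)+1) ^ k i.castSucc)
        = fun i : Fin n => a (((i:ℕ):ZMod 3)+1) ^ k i.castSucc := by
      funext i
      rw [Fin.coe_castSucc]
    rw [he]
  set W : B3 := (List.ofFn fun i : Fin n => a (((i:ℕ):ZMod 3) + 1) ^ k i.castSucc).prod with hW
  set L : ZMod 3 := ((n:ℕ):ZMod 3) + 1 with hL
  set klast : ℕ := k (Fin.last n) with hklast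
  set β : B3 := a L ^ klast * α * (a L ^ klast)⁻¹ with hβdef
  have hconjβ : IsConj α β := isConj_iff.mpr ⟨_, rfl⟩
  have hβ : β = δ ^ u * (a (L + (u : ZMod 3)) ^ klast * W) := by
    have h1 : β = (a L ^ klast * δ ^ u) * W := by rw [hβdef, hα2]; group
    rw [a_pow_mul_delta_zpow] at h1
    rw [h1, mul_assoc]
  set M : ZMod 3 := L + (u : ZMod 3) with hM
  have hMcast : M = ((u + ((n:ℕ)+1) : ℤ) : ZMod 3) := by
    rw [hM, hL]
    push_cast
    ring
  have tri : ∀ j : ZMod 3, j = 0 ∨ j = 1 ∨ j = 2 := by decide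
  have hdvd : (3:ℤ) ∣ (u + ((n:ℕ)+1)) := by
    rcases tri M with hM0 | hM1 | hM2
    · rw [hMcast] at hM0
      exact_mod_cast (ZMod.intCast_zmod_eq_zero_iff_dvd _ 3).mp hM0
    · -- M = 1 : contradiction
      exfalso
      cases n with
      | zero =>
        -- r = 1, u ≡ 0 (mod 3): the permutation is trivial
        have hu0 : (u : ZMod 3) = 0 := by
          have h := hM1
          rw [hMcast] at h
          push_cast at h
          linear_combination h
        obtain ⟨s, hsval⟩ : (3:ℤ) ∣ u :=
          (ZMod.intCast_zmod_eq_zero_iff_dvd u 3).mp (by exact_mod_cast hu0)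
        have hk0 : Even (k 0) := by simpa using hsum
        obtain ⟨t, ht⟩ := hk0
        have hP : permOf α = 1 := by
          rw [hperm]
          rw [show (List.ofFn fun j : Fin 1 => perm3 (((j:ℕ):ZMod 3) + 1) ^ k j)
              = [perm3 1 ^ k 0] from by simp]
          rw [List.prod_cons, List.prod_nil, mul_one, ht, ← two_mul, pow_mul,
            perm3_sq, one_pow, mul_one, hsval, permOf_delta_zpow_three_mul]
        rw [hP] at h3
        simp [Equiv.Perm.IsThreeCycle, Equiv.Perm.cycleType_one] at h3
      | succ p =>
        -- r ≥ 2 : cycling merges two syllables, contradicting minimality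
        set m' : Fin (p+1) → ℕ :=
          fun j => Fin.cases (klast + k 0) (fun i : Fin p => k i.succ.castSucc) j with hm'
        have hm'pos : ∀ j, 1 ≤ m' j := by
          intro j
          refine Fin.cases ?_ ?_ j
          · have := hk 0
            simp only [hm', Fin.cases_zero]
            omega
          · intro i
            simp only [hm', Fin.cases_succ]
            exact hk _
        have key : a (1 : ZMod 3) ^ klast * W
            = (List.ofFn fun j : Fin (p+1) => a (1 + ((j:ℕ):ZMod 3)) ^ m' j).prod := by
          rw [hW, List.ofFn_succ, List.prod_cons, List.ofFn_succ, List.prod_cons]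
          have hfun : (fun i : Fin p => a (1 + (((i.succ : Fin (p+1)):ℕ):ZMod 3)) ^ m' i.succ)
              = fun i : Fin p => a ((((i.succ : Fin (p+1)):ℕ):ZMod 3) + 1) ^ k i.succ.castSucc := by
            funext i
            simp only [hm', Fin.cases_succ]
            rw [add_comm]
          rw [hfun]
          simp only [hm', Fin.cases_zero, Fin.val_zero, Nat.cast_zero, add_zero, zero_add,
            Fin.castSucc_zero]
          rw [pow_add, mul_assoc]
        have hβw : β = δ ^ u * wordProd (awF 1 (p+1) m') := by
          rw [hβ, hM1, wordProd_awF, key]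
        have hsummit : IsSummit β u := by
          refine hs.conj hconjβ ?_
          rw [hβw, zpow_delta_cancel]
          exact wordProd_mem_Pos _
        have hle := hmin β _ hconjβ hsummit (ndword_awF _ _ _ hm'pos) hβw
        rw [syl_awF _ _ _ hm'pos] at hle
        omega
    · -- M = 2 : contradiction
      exfalso
      cases n with
      | zero =>
        -- r = 1, u ≡ 1 (mod 3): conjugating by a single letter raises the power of δ
        have hL1 : L = 1 := by rw [hL]; norm_num
        have hWone : W = 1 := by rw [hW]; simp
        have hα1 : α = δ ^ u * a L ^ k 0 := by
          rw [hα2, hWone, one_mul]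
          rfl
        have hk0 : Even (k 0) := by simpa using hsum
        obtain ⟨t, ht⟩ := hk0
        have ht1 : 1 ≤ t := by have := hk 0; omega
        obtain ⟨d, hd⟩ : ∃ d, k 0 = d + 2 := ⟨k 0 - 2, by omega⟩
        set γ : B3 := a L * α * (a L)⁻¹ with hγdef
        have hconjγ : IsConj α γ := isConj_iff.mpr ⟨_, rfl⟩
        have hγ : γ = δ ^ (u+1) * a 1 ^ (k 0 - 2) := by
          rw [show k 0 - 2 = d from by omega]
          have h1 : γ = (a L * δ ^ u) * a L ^ (d+1) := by
            rw [hγdef, hα1, hd]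
            group
          rw [a_mul_delta_zpow, ← hM, hM2, hL1] at h1
          calc γ = (δ ^ u * a 2) * (a 1 * a 1 ^ d) := by rw [h1, pow_succ']
            _ = (δ ^ u * (a 2 * a 1)) * a 1 ^ d := by group
            _ = δ ^ (u+1) * a 1 ^ d := by
                rw [show a 2 * a 1 = δ from rfl, ← zpow_add_one]
        have hpos : δ ^ (-(u+1)) * γ ∈ Pos := by
          rw [hγ, zpow_delta_cancel]
          exact pow_mem (a_mem_Pos _) _
        have := hs.2 γ hconjγ (u+1) hpos
        omega
      | succ p =>
        -- r ≥ 2 : the normal form was not left-weighted, contradicting summit maximality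
        obtain ⟨b, hb⟩ : ∃ b, klast = b + 1 := by
          have := hk (Fin.last (p+1))
          exact ⟨klast - 1, by omega⟩
        obtain ⟨c0, hc0⟩ : ∃ c0, k (0 : Fin (p+1)).castSucc = c0 + 1 :=
          ⟨k (0 : Fin (p+1)).castSucc - 1, by have := hk (0 : Fin (p+1)).castSucc; omega⟩
        set rest : B3 := (List.ofFn fun i : Fin p =>
          a ((((i.succ : Fin (p+1)):ℕ):ZMod 3) + 1) ^ k i.succ.castSucc).prod with hrest
        have hWsplit : W = a 1 ^ k (0 : Fin (p+1)).castSucc * rest := by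
          rw [hW, List.ofFn_succ, List.prod_cons]
          norm_num
          rw [hrest]
          have he2 : (fun i : Fin p => a ((((i.succ : Fin (p+1)):ℕ):ZMod 3) + 1) ^ k i.succ.castSucc)
              = fun i : Fin p => a ((((i:ℕ):ZMod 3) + 1) + 1) ^ k i.succ.castSucc := by
            funext i
            congr 2
            rw [Fin.val_succ]
            push_cast
            ring
          rw [he2]
          rfl
        have h20 : a 2 ^ b * δ = δ * a 0 ^ b := by
          have h := a_pow_mul_delta_zpow 1 2 b
          rw [zpow_one] at h
          push_cast at h
          rw [show (2 + 1 : ZMod 3) = 0 from by decide] at h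
          exact h
        have hβ2 : β = δ ^ (u+1) * (a 0 ^ b * (a 1 ^ c0 * rest)) := by
          calc β = δ ^ u * ((a 2 ^ b * (a 2 * a 1)) * (a 1 ^ c0 * rest)) := by
                rw [hβ, hM2, hWsplit, hb, hc0]
                group
            _ = δ ^ u * ((a 2 ^ b * δ) * (a 1 ^ c0 * rest)) := rfl
            _ = δ ^ u * (δ * (a 0 ^ b * (a 1 ^ c0 * rest))) := by
                rw [h20]
                group
            _ = δ ^ (u+1) * (a 0 ^ b * (a 1 ^ c0 * rest)) := by
                rw [← mul_assoc, ← zpow_add_one]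
        have hpos : δ ^ (-(u+1)) * β ∈ Pos := by
          rw [hβ2, zpow_delta_cancel]
          refine mul_mem (pow_mem (a_mem_Pos _) _) (mul_mem (pow_mem (a_mem_Pos _) _) ?_)
          rw [hrest]
          exact ofFn_pow_mem_Pos _ _
        have := hs.2 β hconjβ (u+1) hpos
        omega
  refine ⟨by omega, ?_⟩
  -- some exponent is even
  by_contra hodd
  push_neg at hodd
  have hodd' : ∀ j, Odd (k j) := fun j => Nat.not_even_iff_odd.mp (hodd j)
  -- all exponents odd forces the number of syllables to be even,
  -- and then the underlying permutation is trivial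
  have hEvenr : Even (n+1) := by
    have h1 : (∑ j, k j) % 2 = (n+1) % 2 := by
      conv_lhs => rw [Finset.sum_nat_mod]
      rw [Finset.sum_congr rfl (fun j _ => (Nat.odd_iff.mp (hodd' j) : k j % 2 = 1))]
      simp [Finset.card_univ]
    have h2 := Nat.even_iff.mp hsum
    rw [h1] at h2
    exact Nat.even_iff.mpr h2
  obtain ⟨t, htr⟩ := hEvenr
  have hpa : permOf α = 1 := by
    rw [hperm]
    have he : (fun j : Fin (n+1) => perm3 (((j:ℕ):ZMod 3) + 1) ^ k j)
        = fun j : Fin (n+1) => perm3 ((0:ZMod 3) + ((j:ℕ):ZMod 3) + 1) := by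
      funext j
      rw [perm3_pow_odd _ (hodd' j), zero_add]
    rw [he, QP_eq, show n+1 = 2*t from by omega, QP_even, ← permOf_delta]
    obtain ⟨s, hst⟩ := hdvd
    rw [inv_pow, ← zpow_natCast (permOf δ) t, ← zpow_neg, ← zpow_add,
      show u + -(t:ℤ) = 3 * (s - t) from by omega]
    exact permOf_delta_zpow_three_mul _
  rw [hpa] at h3
  simp [Equiv.Perm.IsThreeCycle, Equiv.Perm.cycleType_one] at h3
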